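/- arXiv:2303.14359 — 2 statements merged into one kernel-verified Lean document; each statement's English description precedes it below -/
import Mathlib

section
/- Let H be a real Hilbert space, F ⊆ H a closed linear subspace, e ∈ H with ‖e‖ = 1 such that H = span{e} ⊕ F, and η ∈ (0, 1) such that |⟨u, e⟩| ≤ η‖u‖ for all u ∈ F. Then: (a) whenever ξ = γ·e + u with γ ∈ ℝ, u ∈ F and ‖ξ‖ = 1, one has |γ| ≤ 1/√(1 − η²) and ‖u‖ ≤ 1/√(1 − η²); (b) the set C := {u + γ·e : u ∈ F, γ ≥ 0, ‖u‖ ≤ γ/2} is a closed convex proper cone and, with r := √(1 − η²)/3, the closed ball B(e, r) is contained in C and in the dual cone C′ = {w ∈ H : ⟨w, v⟩ ≥ 0 for all v ∈ C}. -/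
open scoped RealInnerProductSpace

noncomputable section

variable {H : Type*}

/-- The dual cone `C' = {w : ⟪w, v⟫ ≥ 0 for all v ∈ C}`. -/
def dualCone [NormedAddCommGroup H] [InnerProductSpace ℝ H] (C : Set H) : Set H :=
  {w : H | ∀ v ∈ C, 0 ≤ ⟪w, v⟫}

/-- Example 3.1(iii): if the angle between `span{e}` and the closed complement `F` is
uniformly separated from zero (`|⟪u, e⟫| ≤ η‖u‖` on `F`), then (a) the components of any
unit vector are bounded by `1/√(1-η²)`, and (b) the cone
`C = {u + γe : u ∈ F, γ ≥ 0, ‖u‖ ≤ γ/2}` is a closed convex proper cone containing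
`B(e, √(1-η²)/3)`, which is also contained in the dual cone `C'`. -/
theorem graph_cone_satisfies_condition_C
    [NormedAddCommGroup H] [InnerProductSpace ℝ H]
    (F : Submodule ℝ H) (hF : IsClosed (F : Set H))
    (e : H) (he : ‖e‖ = 1)
    (hcompl : IsCompl (Submodule.span ℝ {e}) F)
    (η : ℝ) (hη : η ∈ Set.Ioo (0 : ℝ) 1)
    (hangle : ∀ u ∈ F, |⟪u, e⟫| ≤ η * ‖u‖)
    (C : Set H)
    (hC : C = {x : H | ∃ u ∈ F, ∃ γ : ℝ, 0 ≤ γ ∧ ‖u‖ ≤ γ / 2 ∧ x = u + γ • e})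
    (r : ℝ) (hr : r = Real.sqrt (1 - η ^ 2) / 3) :
    (∀ γ : ℝ, ∀ u ∈ F, ‖γ • e + u‖ = 1 →
      |γ| ≤ 1 / Real.sqrt (1 - η ^ 2) ∧ ‖u‖ ≤ 1 / Real.sqrt (1 - η ^ 2)) ∧
    IsClosed C ∧ Convex ℝ C ∧ (∀ t : ℝ, 0 ≤ t → ∀ v ∈ C, t • v ∈ C) ∧
    C ∩ (-C) = {0} ∧
    Metric.closedBall e r ⊆ C ∧
    Metric.closedBall e r ⊆ dualCone C := by
  obtain ⟨hη0, hη1⟩ := hη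
  have hη2 : (0:ℝ) < 1 - η ^ 2 := by nlinarith
  have hs0 : 0 < Real.sqrt (1 - η ^ 2) := Real.sqrt_pos.mpr hη2
  set s := Real.sqrt (1 - η ^ 2) with hs
  have hs2 : s ^ 2 = 1 - η ^ 2 := Real.sq_sqrt hη2.le
  have hs1 : s ≤ 1 := by nlinarith
  subst hr
  -- key norm lower bound
  have key : ∀ γ : ℝ, ∀ u ∈ F, s * |γ| ≤ ‖γ • e + u‖ ∧ s * ‖u‖ ≤ ‖γ • e + u‖ := by
    intro γ u hu
    have hin : |⟪u, e⟫| ≤ η * ‖u‖ := hangle u hu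
    have hexp : ‖γ • e + u‖ ^ 2 = γ ^ 2 + 2 * (γ * ⟪u, e⟫) + ‖u‖ ^ 2 := by
      rw [norm_add_sq_real, real_inner_smul_left, real_inner_comm e u, norm_smul, he,
        mul_one, Real.norm_eq_abs, sq_abs]
    have hbound : -(|γ| * (η * ‖u‖)) ≤ γ * ⟪u, e⟫ := by
      have h1 : -|γ * ⟪u, e⟫| ≤ γ * ⟪u, e⟫ := neg_abs_le _
      have h2 : |γ * ⟪u, e⟫| = |γ| * |⟪u, e⟫| := abs_mul _ _
      have h3 : |γ| * |⟪u, e⟫| ≤ |γ| * (η * ‖u‖) :=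
        mul_le_mul_of_nonneg_left hin (abs_nonneg γ)
      linarith
    constructor
    · have hsq : (s * |γ|) ^ 2 ≤ ‖γ • e + u‖ ^ 2 := by
        rw [hexp, mul_pow, hs2, sq_abs]
        nlinarith [sq_nonneg (η * |γ| - ‖u‖), sq_abs γ]
      have := Real.sqrt_le_sqrt hsq
      rwa [Real.sqrt_sq (by positivity), Real.sqrt_sq (norm_nonneg _)] at this
    · have hsq : (s * ‖u‖) ^ 2 ≤ ‖γ • e + u‖ ^ 2 := by
        rw [hexp, mul_pow, hs2]
        nlinarith [sq_nonneg (|γ| - η * ‖u‖), sq_abs γ]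
      have := Real.sqrt_le_sqrt hsq
      rwa [Real.sqrt_sq (by positivity), Real.sqrt_sq (norm_nonneg _)] at this
  -- existence of the decomposition
  have decomp : ∀ x : H, ∃ γ : ℝ, ∃ u ∈ F, x = γ • e + u := by
    intro x
    have hx : x ∈ (Submodule.span ℝ {e} ⊔ F : Submodule ℝ H) := by
      rw [hcompl.sup_eq_top]; trivial
    rw [Submodule.mem_sup] at hx
    obtain ⟨y, hy, z, hz, hyz⟩ := hx
    rw [Submodule.mem_span_singleton] at hy
    obtain ⟨γ, rfl⟩ := hy
    exact ⟨γ, z, hz, hyz.symm⟩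
  refine ⟨?_, ?_, ?_, ?_, ?_, ?_, ?_⟩
  -- (a)
  · intro γ u hu hnorm
    obtain ⟨h1, h2⟩ := key γ u hu
    rw [hnorm] at h1 h2
    constructor
    · rw [le_div_iff₀ hs0]; linarith
    · rw [le_div_iff₀ hs0]; linarith
  -- closedness
  · have hseq : IsSeqClosed C := by
      intro xs x hxs hx
      obtain ⟨γ, u, hu, hxd⟩ := decomp x
      simp only [hC, Set.mem_setOf_eq] at hxs ⊢
      choose us hus γs hγs hns hxns using hxs
      have hdiff : ∀ n, xs n - x = (γs n - γ) • e + (us n - u) := by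
        intro n
        rw [hxns n, hxd]
        module
      have hkey : ∀ n, s * |γs n - γ| ≤ ‖xs n - x‖ ∧ s * ‖us n - u‖ ≤ ‖xs n - x‖ := by
        intro n
        rw [hdiff n]
        exact key _ _ (F.sub_mem (hus n) hu)
      have hx0 : Filter.Tendsto (fun n => ‖xs n - x‖) Filter.atTop (nhds 0) :=
        tendsto_iff_norm_sub_tendsto_zero.mp hx
      have hγt : Filter.Tendsto γs Filter.atTop (nhds γ) := by
        rw [tendsto_iff_dist_tendsto_zero]
        simp only [Real.dist_eq]
        refine squeeze_zero (g := fun n => ‖xs n - x‖ / s) (fun n => abs_nonneg _) (fun n => ?_) ?_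
        · rw [le_div_iff₀ hs0]
          have := (hkey n).1
          linarith
        · simpa using hx0.div_const s
      have hut : Filter.Tendsto us Filter.atTop (nhds u) := by
        have h1 : Filter.Tendsto (fun n => xs n - γs n • e) Filter.atTop (nhds (x - γ • e)) :=
          hx.sub (hγt.smul_const e)
        have h2 : (fun n => xs n - γs n • e) = us := by
          funext n; rw [hxns n]; exact add_sub_cancel_right _ _
        have h3 : x - γ • e = u := by rw [hxd]; exact add_sub_cancel_left _ _
        rwa [h2, h3] at h1
      refine ⟨u, hu, γ, ?_, ?_, by rw [hxd]; exact add_comm _ _⟩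
      · exact ge_of_tendsto' hγt hγs
      · exact le_of_tendsto_of_tendsto' hut.norm (hγt.div_const 2) hns
    exact hseq.isClosed
  -- convexity
  · intro x hx y hy a b ha hb hab
    simp only [hC, Set.mem_setOf_eq] at hx hy ⊢
    obtain ⟨u, hu, γ, hγ, hun, rfl⟩ := hx
    obtain ⟨v, hv, δ, hδ, hvn, rfl⟩ := hy
    refine ⟨a • u + b • v, F.add_mem (F.smul_mem a hu) (F.smul_mem b hv),
      a * γ + b * δ, by positivity, ?_, by module⟩
    calc ‖a • u + b • v‖ ≤ ‖a • u‖ + ‖b • v‖ := norm_add_le _ _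
      _ = a * ‖u‖ + b * ‖v‖ := by
          rw [norm_smul, norm_smul, Real.norm_eq_abs, Real.norm_eq_abs,
            abs_of_nonneg ha, abs_of_nonneg hb]
      _ ≤ a * (γ / 2) + b * (δ / 2) :=
          add_le_add (mul_le_mul_of_nonneg_left hun ha) (mul_le_mul_of_nonneg_left hvn hb)
      _ = (a * γ + b * δ) / 2 := by ring
  -- cone
  · intro t ht v hv
    simp only [hC, Set.mem_setOf_eq] at hv ⊢
    obtain ⟨u, hu, γ, hγ, hn, rfl⟩ := hv
    refine ⟨t • u, F.smul_mem t hu, t * γ, mul_nonneg ht hγ, ?_, by module⟩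
    rw [norm_smul, Real.norm_eq_abs, abs_of_nonneg ht]
    calc t * ‖u‖ ≤ t * (γ / 2) := mul_le_mul_of_nonneg_left hn ht
      _ = t * γ / 2 := by ring
  -- properness
  · ext x
    simp only [Set.mem_inter_iff, Set.mem_neg, Set.mem_singleton_iff, hC, Set.mem_setOf_eq]
    constructor
    · rintro ⟨⟨u, hu, γ, hγ, hn, hx⟩, ⟨v, hv, δ, hδ, hm, hnx⟩⟩
      have h0 : (γ + δ) • e + (u + v) = 0 := by
        have : (γ + δ) • e + (u + v) = x + -x := by rw [hnx, hx]; module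
        rw [this]; exact add_neg_cancel x
      have h1 := (key (γ + δ) (u + v) (F.add_mem hu hv)).1
      rw [h0, norm_zero] at h1
      have h2 : γ + δ = 0 := by
        have := abs_nonneg (γ + δ)
        nlinarith [abs_nonneg (γ + δ), le_abs_self (γ + δ)]
      have hγ0 : γ = 0 := by linarith
      have hu0 : u = 0 := by
        have := hn
        rw [hγ0] at this
        simpa using norm_le_zero_iff.mp (by linarith : ‖u‖ ≤ 0)
      rw [hx, hγ0, hu0]; simp
    · rintro rfl
      refine ⟨⟨0, F.zero_mem, 0, le_refl 0, by simp, by simp⟩,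
        ⟨0, F.zero_mem, 0, le_refl 0, by simp, by simp⟩⟩
  -- ball ⊆ C
  · intro x hx
    rw [Metric.mem_closedBall, dist_eq_norm] at hx
    obtain ⟨γ', u, hu, hxe⟩ := decomp (x - e)
    obtain ⟨h1, h2⟩ := key γ' u hu
    rw [← hxe] at h1 h2
    have hγ13 : |γ'| ≤ 1 / 3 := by nlinarith [h1, hx, hs0, abs_nonneg γ']
    have hu13 : ‖u‖ ≤ 1 / 3 := by nlinarith [h2, hx, hs0, norm_nonneg u]
    have hγlb : -(1/3) ≤ γ' := (abs_le.mp hγ13).1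
    simp only [hC, Set.mem_setOf_eq]
    refine ⟨u, hu, 1 + γ', by linarith, by linarith, ?_⟩
    have hx' : x = γ' • e + u + e := sub_eq_iff_eq_add.mp hxe
    rw [hx']; module
  -- ball ⊆ dual cone
  · intro w hw v hv
    rw [Metric.mem_closedBall, dist_eq_norm] at hw
    simp only [hC, Set.mem_setOf_eq] at hv
    obtain ⟨u, hu, γ, hγ, hn, rfl⟩ := hv
    have e1 : ⟪w - e, u + γ • e⟫ = ⟪w, u + γ • e⟫ - ⟪e, u + γ • e⟫ := inner_sub_left _ _ _
    have e2 : ⟪e, u + γ • e⟫ = ⟪u, e⟫ + γ := by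
      rw [inner_add_right, real_inner_smul_right, real_inner_self_eq_norm_sq, he,
        real_inner_comm e u]
      ring
    have e4 : ‖u + γ • e‖ ≤ 3 / 2 * γ := by
      have := norm_add_le u (γ • e)
      rw [norm_smul, Real.norm_eq_abs, abs_of_nonneg hγ, he, mul_one] at this
      linarith
    have e3 : -(s / 3 * (3 / 2 * γ)) ≤ ⟪w - e, u + γ • e⟫ := by
      have h5 : |⟪w - e, u + γ • e⟫| ≤ ‖w - e‖ * ‖u + γ • e‖ := abs_real_inner_le_norm _ _
      have h6 : ‖w - e‖ * ‖u + γ • e‖ ≤ s / 3 * (3 / 2 * γ) := by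
        apply mul_le_mul hw e4 (norm_nonneg _) (by positivity)
      linarith [neg_abs_le ⟪w - e, u + γ • e⟫]
    have h7 : -(η * (γ / 2)) ≤ ⟪u, e⟫ := by
      have := hangle u hu
      have h8 : η * ‖u‖ ≤ η * (γ / 2) := mul_le_mul_of_nonneg_left hn hη0.le
      linarith [neg_abs_le ⟪u, e⟫]
    have h9 : 0 ≤ γ * (1 - η / 2 - s / 2) :=
      mul_nonneg hγ (by linarith)
    linarith [e1, e2, e3, h7, h9]
end
end

section
/- Let (Ω, 𝓕, ℙ) be a probability space, θ : Ω → Ω an invertible measure-preserving transformation, d ≥ 1, and A : Ω → L(ℝ^d, ℝ^d) measurable with M := ess sup_ω ‖A(ω)‖ < ∞; set Φ_A(0, ω) = id and Φ_A(n, ω) = A(θ^{n−1}ω)⋯A(ω). Let E, F : Ω → {linear subspaces of ℝ^d} satisfy, for ℙ-a.e. ω: A(ω)E(ω) ⊆ E(θω), A(ω)F(ω) ⊆ F(θω), and ‖A(ω)v‖ ≥ δ‖v‖ for all v ∈ E(ω), where δ > 0. Then the following are equivalent: (1) there exist K, α > 0 such that for ℙ-a.e. ω, for all n ∈ ℕ,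 all v ∈ E(ω) \ {0} and all u ∈ F(ω) \ {0}: ‖Φ_A(n, ω)v‖/‖v‖ ≥ K·e^{αn}·‖Φ_A(n, ω)u‖/‖u‖; (2) there exist N ∈ ℕ, N ≥ 1, and ρ > 1 such that for ℙ-a.e. ω, for all v ∈ E(ω) \ {0} and all u ∈ F(ω) \ {0}: ‖Φ_A(N, ω)v‖/‖v‖ ≥ ρ·‖Φ_A(N, ω)u‖/‖u‖. -/
open MeasureTheory Filter Topology

noncomputable section

variable {Ω : Type*}

/-- The cocycle generated by a random linear map: `Φ_A(0, ω) = id`,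
`Φ_A(n+1, ω) = Φ_A(n, θω) ∘ A(ω)`. -/
def cocycle {E : Type*} [NormedAddCommGroup E] [NormedSpace ℝ E] (θ : Ω → Ω)
    (A : Ω → E →L[ℝ] E) : ℕ → Ω → E →L[ℝ] E
  | 0, _ => ContinuousLinearMap.id ℝ E
  | n + 1, ω => (cocycle θ A n (θ ω)).comp (A ω)

section aux

variable {V : Type*} [NormedAddCommGroup V] [NormedSpace ℝ V]

lemma cocycle_add (θ : Ω → Ω) (A : Ω → V →L[ℝ] V) (m k : ℕ) (ω : Ω) :
    cocycle θ A (m + k) ω = (cocycle θ A m (θ^[k] ω)).comp (cocycle θ A k ω) := by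
  induction k generalizing ω with
  | zero => simp [cocycle]
  | succ k ih =>
    show (cocycle θ A (m + k) (θ ω)).comp (A ω) = _
    rw [ih (θ ω), Function.iterate_succ_apply]
    rfl

lemma cocycle_E_aux (θ : Ω → Ω) (A : Ω → V →L[ℝ] V) (E : Ω → Submodule ℝ V) (δ : ℝ)
    (hδ : 0 ≤ δ) : ∀ (n : ℕ) (ω : Ω),
    (∀ k : ℕ, ∀ w ∈ E (θ^[k] ω),
      A (θ^[k] ω) w ∈ E (θ (θ^[k] ω)) ∧ δ * ‖w‖ ≤ ‖A (θ^[k] ω) w‖) →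
    ∀ v ∈ E ω, cocycle θ A n ω v ∈ E (θ^[n] ω) ∧ δ ^ n * ‖v‖ ≤ ‖cocycle θ A n ω v‖ := by
  intro n
  induction n with
  | zero => intro ω h v hv; simpa [cocycle] using hv
  | succ n ih =>
    intro ω h v hv
    have h0 := h 0
    simp only [Function.iterate_zero_apply] at h0
    obtain ⟨hmem, hlow⟩ := h0 v hv
    have h' : ∀ k : ℕ, ∀ w ∈ E (θ^[k] (θ ω)),
        A (θ^[k] (θ ω)) w ∈ E (θ (θ^[k] (θ ω))) ∧ δ * ‖w‖ ≤ ‖A (θ^[k] (θ ω)) w‖ := by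
      intro k
      rw [← Function.iterate_succ_apply]
      exact h (k + 1)
    obtain ⟨m1, l1⟩ := ih (θ ω) h' (A ω v) hmem
    refine ⟨?_, ?_⟩
    · rw [Function.iterate_succ_apply]
      exact m1
    · calc δ ^ (n + 1) * ‖v‖ = δ ^ n * (δ * ‖v‖) := by ring
        _ ≤ δ ^ n * ‖A ω v‖ := by
            exact mul_le_mul_of_nonneg_left hlow (pow_nonneg hδ n)
        _ ≤ ‖cocycle θ A n (θ ω) (A ω v)‖ := l1
        _ = ‖cocycle θ A (n + 1) ω v‖ := rfl

lemma cocycle_F_aux (θ : Ω → Ω) (A : Ω → V →L[ℝ] V) (F : Ω → Submodule ℝ V) :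
    ∀ (n : ℕ) (ω : Ω),
    (∀ k : ℕ, ∀ w ∈ F (θ^[k] ω), A (θ^[k] ω) w ∈ F (θ (θ^[k] ω))) →
    ∀ u ∈ F ω, cocycle θ A n ω u ∈ F (θ^[n] ω) := by
  intro n
  induction n with
  | zero => intro ω h u hu; simpa [cocycle] using hu
  | succ n ih =>
    intro ω h u hu
    have h0 := h 0
    simp only [Function.iterate_zero_apply] at h0
    have h' : ∀ k : ℕ, ∀ w ∈ F (θ^[k] (θ ω)), A (θ^[k] (θ ω)) w ∈ F (θ (θ^[k] (θ ω))) := by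
      intro k
      rw [← Function.iterate_succ_apply]
      exact h (k + 1)
    rw [Function.iterate_succ_apply]
    exact ih (θ ω) h' (A ω u) (h0 u hu)

lemma cocycle_norm_le_aux (θ : Ω → Ω) (A : Ω → V →L[ℝ] V) (M₀ : ℝ) :
    ∀ (n : ℕ) (ω : Ω), (∀ k : ℕ, ‖A (θ^[k] ω)‖ ≤ M₀) →
    ∀ u : V, ‖cocycle θ A n ω u‖ ≤ M₀ ^ n * ‖u‖ := by
  intro n
  induction n with
  | zero => intro ω h u; simp [cocycle]
  | succ n ih =>
    intro ω h u
    have hM0 : (0:ℝ) ≤ M₀ := le_trans (norm_nonneg _) (by simpa using h 0)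
    have h' : ∀ k : ℕ, ‖A (θ^[k] (θ ω))‖ ≤ M₀ := by
      intro k
      rw [← Function.iterate_succ_apply]
      exact h (k + 1)
    have hAu : ‖A ω u‖ ≤ M₀ * ‖u‖ := by
      calc ‖A ω u‖ ≤ ‖A ω‖ * ‖u‖ := (A ω).le_opNorm u
        _ ≤ M₀ * ‖u‖ := by
            have := h 0
            simp only [Function.iterate_zero_apply] at this
            exact mul_le_mul_of_nonneg_right this (norm_nonneg u)
    calc ‖cocycle θ A (n + 1) ω u‖ = ‖cocycle θ A n (θ ω) (A ω u)‖ := rfl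
      _ ≤ M₀ ^ n * ‖A ω u‖ := ih (θ ω) h' (A ω u)
      _ ≤ M₀ ^ n * (M₀ * ‖u‖) := mul_le_mul_of_nonneg_left hAu (pow_nonneg hM0 n)
      _ = M₀ ^ (n + 1) * ‖u‖ := by ring

/-- Deterministic core of the backward implication. -/
lemma cocycle_key (θ : Ω → Ω) (A : Ω → V →L[ℝ] V) (E F : Ω → Submodule ℝ V)
    (δ M₀ : ℝ) (hδ : 0 < δ) (hδM : δ ≤ M₀) (N : ℕ) (hN : 1 ≤ N) (ρ : ℝ) (hρ : 1 < ρ)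
    (ω : Ω)
    (hgood : ∀ k : ℕ,
      ((∀ v ∈ E (θ^[k] ω), A (θ^[k] ω) v ∈ E (θ (θ^[k] ω))) ∧
       (∀ u ∈ F (θ^[k] ω), A (θ^[k] ω) u ∈ F (θ (θ^[k] ω))) ∧
       (∀ v ∈ E (θ^[k] ω), δ * ‖v‖ ≤ ‖A (θ^[k] ω) v‖)) ∧
      ‖A (θ^[k] ω)‖ ≤ M₀ ∧
      (∀ v ∈ E (θ^[k] ω), v ≠ 0 → ∀ u ∈ F (θ^[k] ω), u ≠ 0 →
        ρ * (‖cocycle θ A N (θ^[k] ω) u‖ / ‖u‖) ≤ ‖cocycle θ A N (θ^[k] ω) v‖ / ‖v‖)) :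
    ∀ n : ℕ, ∀ v ∈ E ω, v ≠ 0 → ∀ u ∈ F ω, u ≠ 0 →
      (δ / M₀) ^ N / ρ * Real.exp (Real.log ρ / N * n) * (‖cocycle θ A n ω u‖ / ‖u‖) ≤
        ‖cocycle θ A n ω v‖ / ‖v‖ := by
  intro n v hv hv0 u hu hu0
  have hM₀pos : 0 < M₀ := lt_of_lt_of_le hδ hδM
  have hρ0 : 0 < ρ := lt_trans one_pos hρ
  have hNpos : 0 < (N : ℝ) := by exact_mod_cast hN
  have hnv : 0 < ‖v‖ := norm_pos_iff.2 hv0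
  have hnu : 0 < ‖u‖ := norm_pos_iff.2 hu0
  have hE' : ∀ k : ℕ, ∀ w ∈ E (θ^[k] ω),
      A (θ^[k] ω) w ∈ E (θ (θ^[k] ω)) ∧ δ * ‖w‖ ≤ ‖A (θ^[k] ω) w‖ :=
    fun k w hw => ⟨(hgood k).1.1 w hw, (hgood k).1.2.2 w hw⟩
  have hF' : ∀ k : ℕ, ∀ w ∈ F (θ^[k] ω), A (θ^[k] ω) w ∈ F (θ (θ^[k] ω)) :=
    fun k => (hgood k).1.2.1
  have hA' : ∀ k : ℕ, ‖A (θ^[k] ω)‖ ≤ M₀ := fun k => (hgood k).2.1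
  have shiftE : ∀ m k : ℕ, ∀ w ∈ E (θ^[k] (θ^[m] ω)),
      A (θ^[k] (θ^[m] ω)) w ∈ E (θ (θ^[k] (θ^[m] ω))) ∧
        δ * ‖w‖ ≤ ‖A (θ^[k] (θ^[m] ω)) w‖ := by
    intro m k
    rw [← Function.iterate_add_apply]
    exact hE' (k + m)
  have shiftA : ∀ m k : ℕ, ‖A (θ^[k] (θ^[m] ω))‖ ≤ M₀ := by
    intro m k
    rw [← Function.iterate_add_apply]
    exact hA' (k + m)
  have lowv : ∀ m : ℕ, cocycle θ A m ω v ∈ E (θ^[m] ω) ∧ δ ^ m * ‖v‖ ≤ ‖cocycle θ A m ω v‖ :=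
    fun m => cocycle_E_aux θ A E δ hδ.le m ω hE' v hv
  have memu : ∀ m : ℕ, cocycle θ A m ω u ∈ F (θ^[m] ω) :=
    fun m => cocycle_F_aux θ A F m ω hF' u hu
  have normv_pos : ∀ m : ℕ, 0 < ‖cocycle θ A m ω v‖ :=
    fun m => lt_of_lt_of_le (by positivity) (lowv m).2
  -- block induction
  have blk : ∀ q' : ℕ, ρ ^ q' * (‖cocycle θ A (N * q') ω u‖ / ‖u‖) ≤
      ‖cocycle θ A (N * q') ω v‖ / ‖v‖ := by
    intro q'
    induction q' with
    | zero =>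
      simp only [Nat.mul_zero, pow_zero, one_mul]
      rw [show cocycle θ A 0 ω = ContinuousLinearMap.id ℝ V from rfl]
      simp only [ContinuousLinearMap.id_apply]
      rw [div_self (ne_of_gt hnu), div_self (ne_of_gt hnv)]
    | succ q ih =>
      by_cases hu0' : cocycle θ A (N * (q + 1)) ω u = 0
      · rw [hu0']
        simp only [norm_zero, zero_div, mul_zero]
        positivity
      · have hsplit : cocycle θ A (N * (q + 1)) ω =
            (cocycle θ A N (θ^[N * q] ω)).comp (cocycle θ A (N * q) ω) := by
          rw [show N * (q + 1) = N + N * q by ring]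
          exact cocycle_add θ A N (N * q) ω
        have happ : ∀ w : V, cocycle θ A (N * (q + 1)) ω w =
            cocycle θ A N (θ^[N * q] ω) (cocycle θ A (N * q) ω w) := by
          intro w; rw [hsplit]; rfl
        have huq : cocycle θ A (N * q) ω u ≠ 0 := by
          intro h0
          apply hu0'
          rw [happ, h0, map_zero]
        have hvq : cocycle θ A (N * q) ω v ≠ 0 := norm_pos_iff.1 (normv_pos (N * q))
        have hstep := (hgood (N * q)).2.2 (cocycle θ A (N * q) ω v) (lowv (N * q)).1 hvq
          (cocycle θ A (N * q) ω u) (memu (N * q)) huq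
        rw [← happ, ← happ] at hstep
        have hb : 0 < ‖cocycle θ A (N * q) ω u‖ := norm_pos_iff.2 huq
        have ha : 0 < ‖cocycle θ A (N * q) ω v‖ := normv_pos (N * q)
        calc ρ ^ (q + 1) * (‖cocycle θ A (N * (q + 1)) ω u‖ / ‖u‖)
            = (ρ * (‖cocycle θ A (N * (q + 1)) ω u‖ / ‖cocycle θ A (N * q) ω u‖)) *
              (ρ ^ q * (‖cocycle θ A (N * q) ω u‖ / ‖u‖)) := by
              field_simp
              ring
          _ ≤ (‖cocycle θ A (N * (q + 1)) ω v‖ / ‖cocycle θ A (N * q) ω v‖) *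
              (‖cocycle θ A (N * q) ω v‖ / ‖v‖) := by
              apply mul_le_mul hstep ih (by positivity) (by positivity)
          _ = ‖cocycle θ A (N * (q + 1)) ω v‖ / ‖v‖ := by
              field_simp
  -- decompose n = r + N * q
  obtain ⟨q, r, hrN, rfl⟩ : ∃ q r : ℕ, r < N ∧ n = r + N * q :=
    ⟨n / N, n % N, Nat.mod_lt _ (by omega), (Nat.mod_add_div n N).symm⟩
  have hco : cocycle θ A (r + N * q) ω =
      (cocycle θ A r (θ^[N * q] ω)).comp (cocycle θ A (N * q) ω) :=
    cocycle_add θ A r (N * q) ω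
  have happ : ∀ w : V, cocycle θ A (r + N * q) ω w =
      cocycle θ A r (θ^[N * q] ω) (cocycle θ A (N * q) ω w) := by
    intro w; rw [hco]; rfl
  have hvn : δ ^ r * ‖cocycle θ A (N * q) ω v‖ ≤ ‖cocycle θ A (r + N * q) ω v‖ := by
    rw [happ]
    exact (cocycle_E_aux θ A E δ hδ.le r (θ^[N * q] ω) (shiftE (N * q))
      (cocycle θ A (N * q) ω v) (lowv (N * q)).1).2
  have hun : ‖cocycle θ A (r + N * q) ω u‖ ≤ M₀ ^ r * ‖cocycle θ A (N * q) ω u‖ := by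
    rw [happ]
    exact cocycle_norm_le_aux θ A M₀ r (θ^[N * q] ω) (shiftA (N * q)) _
  -- numeric estimate
  have hnN : ((r + N * q : ℕ) : ℝ) / N ≤ (q : ℝ) + 1 := by
    rw [div_le_iff₀ hNpos]
    push_cast
    have hrN' : (r : ℝ) ≤ (N : ℝ) := by exact_mod_cast hrN.le
    nlinarith
  have hexp : Real.exp (Real.log ρ / N * ((r + N * q : ℕ) : ℝ)) =
      ρ ^ (((r + N * q : ℕ) : ℝ) / N) := by
    rw [Real.rpow_def_of_pos hρ0]
    congr 1
    ring
  have h2 : ρ ^ (((r + N * q : ℕ) : ℝ) / N) ≤ ρ ^ ((q : ℝ) + 1) :=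
    (Real.rpow_le_rpow_left_iff hρ).2 hnN
  have h3 : ρ ^ ((q : ℝ) + 1) = ρ ^ q * ρ := by
    rw [Real.rpow_add hρ0, Real.rpow_natCast, Real.rpow_one]
  have h4 : (δ / M₀) ^ N ≤ (δ / M₀) ^ r :=
    pow_le_pow_of_le_one (by positivity) (by rw [div_le_one hM₀pos]; exact hδM) hrN.le
  have h1 : (δ / M₀) ^ N / ρ * Real.exp (Real.log ρ / N * ((r + N * q : ℕ) : ℝ)) ≤
      (δ / M₀) ^ r * ρ ^ q := by
    rw [hexp]
    calc (δ / M₀) ^ N / ρ * ρ ^ (((r + N * q : ℕ) : ℝ) / N)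
        = (δ / M₀) ^ N * (ρ ^ (((r + N * q : ℕ) : ℝ) / N) / ρ) := by ring
      _ ≤ (δ / M₀) ^ r * (ρ ^ ((q : ℝ) + 1) / ρ) := by
          exact mul_le_mul h4 (div_le_div_of_nonneg_right h2 hρ0.le) (by positivity)
            (by positivity)
      _ = (δ / M₀) ^ r * ρ ^ q := by
          rw [h3, mul_div_cancel_right₀ _ (ne_of_gt hρ0)]
  calc (δ / M₀) ^ N / ρ * Real.exp (Real.log ρ / N * ((r + N * q : ℕ) : ℝ)) *
        (‖cocycle θ A (r + N * q) ω u‖ / ‖u‖)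
      ≤ (δ / M₀) ^ r * ρ ^ q * (‖cocycle θ A (r + N * q) ω u‖ / ‖u‖) := by
        exact mul_le_mul_of_nonneg_right h1 (by positivity)
    _ ≤ (δ / M₀) ^ r * ρ ^ q * (M₀ ^ r * ‖cocycle θ A (N * q) ω u‖ / ‖u‖) := by
        gcongr
    _ = δ ^ r * (ρ ^ q * (‖cocycle θ A (N * q) ω u‖ / ‖u‖)) := by
        rw [div_pow]
        field_simp
    _ ≤ δ ^ r * (‖cocycle θ A (N * q) ω v‖ / ‖v‖) :=
        mul_le_mul_of_nonneg_left (blk q) (by positivity)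
    _ = δ ^ r * ‖cocycle θ A (N * q) ω v‖ / ‖v‖ := (mul_div_assoc _ _ _).symm
    _ ≤ ‖cocycle θ A (r + N * q) ω v‖ / ‖v‖ := by gcongr

end aux

/-- Remark 5.5(i): for a bounded linear random dynamical system on `ℝ^d` with an invariant
measurable splitting `E(ω) ⊕ F(ω)` and a uniform lower bound `δ` along `E`, exponential
domination over all times is equivalent to single-time domination with a factor `ρ > 1`. -/
theorem dominated_splitting_single_time_characterization
    [MeasurableSpace Ω] (μ : Measure Ω) [IsProbabilityMeasure μ]
    (θ : Ω ≃ᵐ Ω) (hθ : MeasurePreserving (⇑θ) μ μ)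
    (d : ℕ) (hd : 1 ≤ d)
    (A : Ω → EuclideanSpace ℝ (Fin d) →L[ℝ] EuclideanSpace ℝ (Fin d))
    (hAmeas : ∀ x : EuclideanSpace ℝ (Fin d), Measurable fun ω => A ω x)
    (M : ℝ) (hM : ∀ᵐ ω ∂μ, ‖A ω‖ ≤ M)
    (E F : Ω → Submodule ℝ (EuclideanSpace ℝ (Fin d)))
    (δ : ℝ) (hδ : 0 < δ)
    (hInv : ∀ᵐ ω ∂μ, (∀ v ∈ E ω, A ω v ∈ E (θ ω)) ∧ (∀ u ∈ F ω, A ω u ∈ F (θ ω)) ∧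
      (∀ v ∈ E ω, δ * ‖v‖ ≤ ‖A ω v‖)) :
    (∃ K : ℝ, 0 < K ∧ ∃ α : ℝ, 0 < α ∧ ∀ᵐ ω ∂μ, ∀ n : ℕ,
        ∀ v ∈ E ω, v ≠ 0 → ∀ u ∈ F ω, u ≠ 0 →
          K * Real.exp (α * n) * (‖cocycle (⇑θ) A n ω u‖ / ‖u‖) ≤
            ‖cocycle (⇑θ) A n ω v‖ / ‖v‖) ↔
    (∃ N : ℕ, 1 ≤ N ∧ ∃ ρ : ℝ, 1 < ρ ∧ ∀ᵐ ω ∂μ,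
        ∀ v ∈ E ω, v ≠ 0 → ∀ u ∈ F ω, u ≠ 0 →
          ρ * (‖cocycle (⇑θ) A N ω u‖ / ‖u‖) ≤ ‖cocycle (⇑θ) A N ω v‖ / ‖v‖) := by
  constructor
  · rintro ⟨K, hK, α, hα, hae⟩
    refine ⟨max 1 ⌈Real.log (2 / K) / α⌉₊, le_max_left _ _, 2, one_lt_two, ?_⟩
    set N : ℕ := max 1 ⌈Real.log (2 / K) / α⌉₊ with hNdef
    have h2 : (2 : ℝ) ≤ K * Real.exp (α * N) := by
      have hle : Real.log (2 / K) / α ≤ (N : ℝ) :=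
        le_trans (Nat.le_ceil _) (by exact_mod_cast Nat.cast_le.2 (le_max_right _ _))
      have hlog : Real.log (2 / K) ≤ α * N := by
        rw [div_le_iff₀ hα] at hle
        linarith
      have := Real.exp_le_exp.2 hlog
      rw [Real.exp_log (by positivity)] at this
      rw [div_le_iff₀ hK] at this
      linarith
    filter_upwards [hae] with ω hω v hv hv0 u hu hu0
    calc 2 * (‖cocycle (⇑θ) A N ω u‖ / ‖u‖)
        ≤ K * Real.exp (α * N) * (‖cocycle (⇑θ) A N ω u‖ / ‖u‖) :=
          mul_le_mul_of_nonneg_right h2 (by positivity)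
      _ ≤ ‖cocycle (⇑θ) A N ω v‖ / ‖v‖ := hω N v hv hv0 u hu hu0
  · rintro ⟨N, hN, ρ, hρ, hae⟩
    set M₀ : ℝ := max M δ with hM₀def
    have hδM : δ ≤ M₀ := le_max_right _ _
    have hM₀pos : 0 < M₀ := lt_of_lt_of_le hδ hδM
    have hρ0 : 0 < ρ := lt_trans one_pos hρ
    have hNpos : 0 < (N : ℝ) := by exact_mod_cast hN
    refine ⟨(δ / M₀) ^ N / ρ, by positivity, Real.log ρ / N,
      div_pos (Real.log_pos hρ) hNpos, ?_⟩
    have hMM₀ : ∀ᵐ ω ∂μ, ‖A ω‖ ≤ M₀ := hM.mono fun ω h => le_trans h (le_max_left _ _)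
    have hGae : ∀ᵐ ω ∂μ,
        ((∀ v ∈ E ω, A ω v ∈ E (θ ω)) ∧ (∀ u ∈ F ω, A ω u ∈ F (θ ω)) ∧
          (∀ v ∈ E ω, δ * ‖v‖ ≤ ‖A ω v‖)) ∧
        ‖A ω‖ ≤ M₀ ∧
        (∀ v ∈ E ω, v ≠ 0 → ∀ u ∈ F ω, u ≠ 0 →
          ρ * (‖cocycle (⇑θ) A N ω u‖ / ‖u‖) ≤ ‖cocycle (⇑θ) A N ω v‖ / ‖v‖) := by
      filter_upwards [hInv, hMM₀, hae] with ω h1 h2 h3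
      exact ⟨h1, h2, h3⟩
    have hAll : ∀ᵐ ω ∂μ, ∀ k : ℕ,
        ((∀ v ∈ E ((⇑θ)^[k] ω), A ((⇑θ)^[k] ω) v ∈ E (θ ((⇑θ)^[k] ω))) ∧
          (∀ u ∈ F ((⇑θ)^[k] ω), A ((⇑θ)^[k] ω) u ∈ F (θ ((⇑θ)^[k] ω))) ∧
          (∀ v ∈ E ((⇑θ)^[k] ω), δ * ‖v‖ ≤ ‖A ((⇑θ)^[k] ω) v‖)) ∧
        ‖A ((⇑θ)^[k] ω)‖ ≤ M₀ ∧
        (∀ v ∈ E ((⇑θ)^[k] ω), v ≠ 0 → ∀ u ∈ F ((⇑θ)^[k] ω), u ≠ 0 →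
          ρ * (‖cocycle (⇑θ) A N ((⇑θ)^[k] ω) u‖ / ‖u‖) ≤
            ‖cocycle (⇑θ) A N ((⇑θ)^[k] ω) v‖ / ‖v‖) := by
      rw [ae_all_iff]
      intro k
      exact (hθ.iterate k).quasiMeasurePreserving.ae hGae
    filter_upwards [hAll] with ω hω n v hv hv0 u hu hu0
    exact cocycle_key (⇑θ) A E F δ M₀ hδ hδM N hN ρ hρ ω hω n v hv hv0 u hu hu0

end
end
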